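/- For every integer k with 0 ≤ k ≤ ν/2 − 1, if a graph G on ν vertices is 2k-factor-critical, then G is k-extendable. -/

import Mathlib

open SimpleGraph

/-- `G` has a matching with exactly `k` edges. -/
def HasMatchingOfSize {V : Type*} (G : SimpleGraph V) (k : ℕ) : Prop :=
  ∃ M : G.Subgraph, M.IsMatching ∧ M.edgeSet.ncard = k

/-- `G` is `k`-extendable: connected, has a matching of size `k`, and every
matching of size `k` extends to a perfect matching. -/
def Extendable {V : Type*} (G : SimpleGraph V) (k : ℕ) : Prop :=
  G.Connected ∧ HasMatchingOfSize G k ∧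
    ∀ M : G.Subgraph, M.IsMatching → M.edgeSet.ncard = k →
      ∃ M' : G.Subgraph, M ≤ M' ∧ M'.IsPerfectMatching

/-- `G` is `n`-factor-critical: deleting any `n` vertices leaves a graph with
a perfect matching. -/
def FactorCritical {V : Type*} [Fintype V] (G : SimpleGraph V) (n : ℕ) : Prop :=
  ∀ S : Finset V, S.card = n →
    ∃ M : (G.induce ((↑S : Set V)ᶜ)).Subgraph, M.IsPerfectMatching

/-- `G` is `k½`-extendable: for every vertex `v`, `G - v` has a matching of
size `k`, and every matching of size `k` in `G - v` extends to a perfect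
matching of `G - v`. -/
def HalfExtendable {V : Type*} (G : SimpleGraph V) (k : ℕ) : Prop :=
  ∀ v : V,
    HasMatchingOfSize (G.induce ({v}ᶜ : Set V)) k ∧
    ∀ M : (G.induce ({v}ᶜ : Set V)).Subgraph, M.IsMatching → M.edgeSet.ncard = k →
      ∃ M' : (G.induce ({v}ᶜ : Set V)).Subgraph, M ≤ M' ∧ M'.IsPerfectMatching


private lemma degree_instance_irrel {W : Type*} (H : SimpleGraph W) (v : W)
    (i1 i2 : Fintype (H.neighborSet v)) : @SimpleGraph.degree _ H v i1 = @SimpleGraph.degree _ H v i2 := by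
  congr!

lemma matching_verts_ncard {V : Type*} [Fintype V] {G : SimpleGraph V} {M : G.Subgraph}
    (h : M.IsMatching) : M.verts.ncard = 2 * M.edgeSet.ncard := by
  classical
  have h1 : M.verts.toFinset.card = 2 * M.coe.edgeFinset.card := by
    rw [← M.coe.sum_degrees_eq_twice_card_edges, Set.toFinset_card, ← Finset.card_univ,
      Finset.card_eq_sum_ones]
    refine Finset.sum_congr rfl fun x _ => ?_
    rw [degree_instance_irrel M.coe x _ (Subgraph.coeFiniteAt x)]
    refine ((M.coe_degree x).trans ?_).symm
    exact Subgraph.degree_eq_one_iff_existsUnique_adj.mpr (h x.2)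
  have h2 : M.coe.edgeFinset.card = M.edgeSet.ncard := by
    rw [← M.image_coe_edgeSet_coe]
    rw [Set.ncard_image_of_injective _ (Sym2.map.injective Subtype.val_injective)]
    rw [Set.ncard_eq_toFinset_card']
    unfold SimpleGraph.edgeFinset
    congr!
  rw [Set.ncard_eq_toFinset_card', h1, h2]

lemma extend_matching {V : Type*} [Fintype V] {G : SimpleGraph V} {n : ℕ}
    (hfc : ∀ S : Finset V, S.card = n →
      ∃ M : (G.induce ((↑S : Set V)ᶜ)).Subgraph, M.IsPerfectMatching)
    {M : G.Subgraph} (hM : M.IsMatching)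
    (hcard : M.verts.ncard = n) :
    ∃ M' : G.Subgraph, M ≤ M' ∧ M'.IsPerfectMatching := by
  classical
  have hScard : M.verts.toFinset.card = n := by
    rw [← Set.ncard_eq_toFinset_card']; exact hcard
  obtain ⟨N, hN⟩ := hfc M.verts.toFinset hScard
  have hsv : ((↑M.verts.toFinset : Set V)ᶜ) = M.vertsᶜ := by simp
  let f := SimpleGraph.Embedding.induce (G := G) ((↑M.verts.toFinset : Set V)ᶜ)
  let N' := N.map f.toHom
  have hN'm : N'.IsMatching := Subgraph.IsMatching.map f.toHom f.injective hN.1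
  have hN'v : N'.verts = ((↑M.verts.toFinset : Set V)ᶜ) := by
    show f.toHom '' N.verts = ((↑M.verts.toFinset : Set V)ᶜ)
    rw [hN.2.verts_eq_univ, Set.image_univ]
    exact Subtype.range_coe
  have hdisj : Disjoint M.support N'.support := by
    rw [hM.support_eq_verts, hN'm.support_eq_verts, hN'v, hsv]
    exact disjoint_compl_right
  refine ⟨M ⊔ N', le_sup_left, hM.sup hN'm hdisj, fun v => ?_⟩
  show v ∈ M.verts ∪ N'.verts
  rw [hN'v, hsv]
  exact (Set.union_compl_self M.verts).symm ▸ Set.mem_univ v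

/-- a connected `2k`-factor-critical graph with `k ≤ ν/2 - 1` is `k`-extendable. -/
theorem stmt0 {V : Type*} [Fintype V] (G : SimpleGraph V) (k : ℕ)
    (hconn : G.Connected) (hk : 2 * k + 2 ≤ Fintype.card V)
    (hfc : FactorCritical G (2 * k)) : Extendable G k := by
  classical
  refine ⟨hconn, ?_, ?_⟩
  · suffices h : ∀ j, j ≤ k → HasMatchingOfSize G j from h k le_rfl
    intro j hj
    induction j with
    | zero =>
      exact ⟨⊥, fun v hv => absurd hv (Set.notMem_empty v), by simp⟩
    | succ j ih =>
      obtain ⟨M, hM, hMc⟩ := ih (Nat.le_of_succ_le hj)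
      have hv2 : M.verts.ncard = 2 * j := by rw [matching_verts_ncard hM, hMc]
      have hvle : M.verts.toFinset.card ≤ 2 * k := by
        rw [← Set.ncard_eq_toFinset_card', hv2]; omega
      obtain ⟨S, hSsub, -, hScard⟩ := Finset.exists_subsuperset_card_eq
        (Finset.subset_univ M.verts.toFinset) hvle
        (by rw [Finset.card_univ]; omega)
      obtain ⟨N, hN⟩ := hfc S hScard
      have hcpos : 0 < Sᶜ.card := by
        rw [Finset.card_compl, hScard]; omega
      obtain ⟨v, hvS⟩ := Finset.card_pos.mp hcpos
      have hvS' : v ∈ ((↑S : Set V)ᶜ) := by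
        simpa using Finset.mem_compl.mp hvS
      obtain ⟨w, hw, -⟩ := hN.1 (hN.2 ⟨v, hvS'⟩)
      have hadj : G.Adj v ↑w := N.adj_sub hw
      have hvM : v ∉ M.verts := fun h =>
        (Finset.mem_compl.mp hvS) (hSsub (Set.mem_toFinset.mpr h))
      have hwM : (↑w : V) ∉ M.verts := fun h =>
        w.2 (by exact_mod_cast hSsub (Set.mem_toFinset.mpr h))
      refine ⟨M ⊔ G.subgraphOfAdj hadj,
        hM.sup (Subgraph.IsMatching.subgraphOfAdj hadj) ?_, ?_⟩
      · rw [hM.support_eq_verts, support_subgraphOfAdj]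
        rw [Set.disjoint_left]
        rintro x hx (rfl | rfl)
        · exact hvM hx
        · exact hwM hx
      · rw [Subgraph.edgeSet_sup,
          Set.ncard_union_eq ?_ (Set.toFinite _) (Set.toFinite _), hMc]
        · rw [edgeSet_subgraphOfAdj, Set.ncard_singleton]
        · rw [edgeSet_subgraphOfAdj, Set.disjoint_singleton_right]
          intro he
          exact hvM (M.edge_vert (Subgraph.mem_edgeSet.mp he))
  · intro M hM hMc
    exact extend_matching hfc hM (by rw [matching_verts_ncard hM, hMc])
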